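/- Let k be a field of characteristic zero, let A be a Poisson algebra over k, and let L be a field extension of k. Equip the L-algebra L ⊗_k A with the canonical Poisson bracket, i.e. an L-bilinear bracket that is antisymmetric, satisfies the Jacobi identity, is a derivation in each argument, and satisfies {a ⊗ b, c ⊗ d} = ac ⊗ {b, d} for all a, c ∈ L and b, d ∈ A. If the Poisson L-algebra L ⊗_k A satisfies the ACC on radical Poisson ideals, then A satisfies the ACC on radical Poisson ideals. -/

import Mathlib

/-- `B` is a Poisson bracket on the commutative `k`-algebra `A`: it is `k`-bilinear
(additivity and `k`-homogeneity in the first argument, together with antisymmetry, give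
bilinearity), antisymmetric, satisfies the Jacobi identity, and is a derivation in each
argument. -/
def IsPoissonBracket (k : Type*) {A : Type*} [CommRing k] [CommRing A] [Algebra k A]
    (B : A → A → A) : Prop :=
  (∀ a b c : A, B (a + b) c = B a c + B b c) ∧
  (∀ (r : k) (a b : A), B (r • a) b = r • B a b) ∧
  (∀ a b : A, B a b = - B b a) ∧
  (∀ a b c : A, B a (B b c) + B b (B c a) + B c (B a b) = 0) ∧
  (∀ a b c : A, B a (b * c) = B a b * c + b * B a c)

/-- An ideal `I` is a Poisson ideal for the bracket `B` if `{A, I} ⊆ I`. -/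
def IsPoissonIdeal {A : Type*} [CommRing A] (B : A → A → A) (I : Ideal A) : Prop :=
  ∀ x : A, ∀ y ∈ I, B x y ∈ I

/-- `A` satisfies the ascending chain condition on radical Poisson ideals. -/
def PoissonRadicalACC {A : Type*} [CommRing A] (B : A → A → A) : Prop :=
  ∀ c : ℕ → Ideal A, (∀ n, IsPoissonIdeal B (c n)) → (∀ n, (c n).IsRadical) →
    Monotone c → ∃ N, ∀ n, N ≤ n → c n = c N

open scoped TensorProduct


/-- A derivation-like map preserving an ideal preserves its radical, provided all
nonzero naturals are units (e.g. in a `ℚ`-algebra). -/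
lemma seidenberg_aux {R : Type*} [CommRing R]
    (hu : ∀ n : ℕ, n ≠ 0 → IsUnit ((n : R)))
    (D : R → R) (hadd : ∀ x y, D (x + y) = D x + D y)
    (hmul : ∀ x y, D (x * y) = D x * y + x * D y)
    (I : Ideal R) (hI : ∀ y ∈ I, D y ∈ I)
    {a : R} {n : ℕ} (ha : a ^ n ∈ I) : D a ^ (2 * n) ∈ I := by
  have hD1 : D 1 = 0 := by
    have := hmul 1 1
    simp only [mul_one, one_mul] at this
    exact left_eq_add.mp this
  have Dpow : ∀ (x : R) (s : ℕ), D (x ^ (s + 1)) = ((s : R) + 1) * (x ^ s * D x) := by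
    intro x s
    induction s with
    | zero => simp
    | succ s ih =>
      have h1 : x ^ (s + 1 + 1) = x * x ^ (s + 1) := by ring
      rw [h1, hmul, ih]
      push_cast
      ring
  have Dpow0 : ∀ (x : R) (s : ℕ), D (x ^ s) = (s : R) * (x ^ (s - 1) * D x) := by
    intro x s
    cases s with
    | zero => simp [hD1]
    | succ s => rw [Dpow]; push_cast; ring_nf
  have key : ∀ j, j ≤ n → a ^ (n - j) * D a ^ (2 * j) ∈ I := by
    intro j
    induction j with
    | zero => intro _; simpa using ha
    | succ j ih =>
      intro hj
      have H := ih (by omega)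
      set m := n - (j + 1) with hm
      have hnm : n - j = m + 1 := by omega
      rw [hnm] at H
      set E := D a with hE
      -- apply D and multiply by E
      have h2 : E * D (a ^ (m + 1) * E ^ (2 * j)) ∈ I :=
        I.mul_mem_left _ (hI _ H)
      have hterm2 : ((2 * j : ℕ) : R) * (D E * (a ^ (m + 1) * (E ^ (2 * j - 1) * E))) ∈ I := by
        rcases Nat.eq_zero_or_pos j with h0 | hpos
        · simp [h0]
        · have hEE : E ^ (2 * j - 1) * E = E ^ (2 * j) := by
            rw [← pow_succ]
            congr 1
            omega
          rw [hEE]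
          exact Ideal.mul_mem_left _ _ (Ideal.mul_mem_left _ _ H)
      have hid : E * D (a ^ (m + 1) * E ^ (2 * j)) =
          ((m : R) + 1) * (a ^ m * E ^ (2 * j + 2)) +
            ((2 * j : ℕ) : R) * (D E * (a ^ (m + 1) * (E ^ (2 * j - 1) * E))) := by
        rw [hmul, Dpow a m, Dpow0 E (2 * j)]
        have hp : E ^ (2 * j + 2) = E ^ (2 * j) * E ^ 2 := by rw [pow_add]
        rw [hp]
        ring
      have hmem : ((m : R) + 1) * (a ^ m * E ^ (2 * j + 2)) ∈ I := by
        have := Ideal.sub_mem _ h2 hterm2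
        rwa [hid, add_sub_cancel_right] at this
      have hu' : IsUnit ((m : R) + 1) := by
        have := hu (m + 1) (by omega)
        push_cast at this
        exact this
      obtain ⟨u, hu2⟩ := hu'
      have hx : a ^ m * E ^ (2 * j + 2) = ↑u⁻¹ * (((m : R) + 1) * (a ^ m * E ^ (2 * j + 2))) := by
        rw [← hu2, ← mul_assoc, Units.inv_mul, one_mul]
      have : a ^ m * E ^ (2 * j + 2) ∈ I := by
        rw [hx]; exact I.mul_mem_left _ hmem
      have h2j : 2 * (j + 1) = 2 * j + 2 := by ring
      rw [h2j]
      exact this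
  have := key n le_rfl
  simpa using this

/-- If `1 ⊗ x` lies in the extension of an ideal `c` along `A → L ⊗[k] A`, then `x ∈ c`. -/
lemma mem_of_tmul_mem_aux {k L A : Type*} [Field k] [Field L] [Algebra k L]
    [CommRing A] [Algebra k A] (c : Ideal A) {x : A}
    (hx : (1 : L) ⊗ₜ[k] x ∈
      Ideal.map (Algebra.TensorProduct.includeRight : A →ₐ[k] L ⊗[k] A) c) :
    x ∈ c := by
  classical
  set b := Module.Basis.ofVectorSpace k L with hb
  have h1 : b.repr 1 ≠ 0 := by
    intro h
    have : (1 : L) = 0 := by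
      have := b.repr.injective (a₁ := 1) (a₂ := 0) (by simp [h])
      simpa using this
    exact one_ne_zero this
  obtain ⟨i, hi⟩ : ∃ i, b.repr 1 i ≠ 0 := by
    by_contra h
    push_neg at h
    exact h1 (Finsupp.ext h)
  set φ : L ⊗[k] A →ₗ[k] A :=
    (TensorProduct.lid k A).toLinearMap ∘ₗ TensorProduct.map (b.coord i) LinearMap.id with hφ
  have hφt : ∀ (a : L) (y : A), φ (a ⊗ₜ[k] y) = b.coord i a • y := by
    intro a y
    simp [hφ]
  have hmulφ : ∀ (z : L ⊗[k] A) (y : A), φ (z * ((1 : L) ⊗ₜ[k] y)) = φ z * y := by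
    intro z y
    induction z using TensorProduct.induction_on with
    | zero => simp
    | tmul a w =>
      rw [Algebra.TensorProduct.tmul_mul_tmul, mul_one, hφt, hφt, smul_mul_assoc]
    | add z1 z2 h1 h2 => rw [add_mul, map_add, h1, h2, map_add, add_mul]
  have hmain : ∀ w : L ⊗[k] A, φ (w * ((1:L) ⊗ₜ[k] x)) ∈ c := by
    rw [Ideal.map] at hx
    refine Submodule.span_induction
      (p := fun z _ => ∀ w : L ⊗[k] A, φ (w * z) ∈ c) ?_ ?_ ?_ ?_ hx
    · rintro _ ⟨y, hy, rfl⟩ w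
      rw [Algebra.TensorProduct.includeRight_apply, hmulφ]
      exact c.mul_mem_left _ hy
    · intro w; simp
    · intro z1 z2 _ _ hz1 hz2 w
      rw [mul_add, map_add]
      exact c.add_mem (hz1 w) (hz2 w)
    · intro r z _ hz w
      rw [smul_eq_mul, show w * (r * z) = (w * r) * z by ring]
      exact hz (w * r)
  have h2 := hmain 1
  rw [one_mul, hφt] at h2
  have hrx : x = (b.repr 1 i)⁻¹ • (Module.Basis.coord b i 1 • x) := by
    rw [Module.Basis.coord_apply, smul_smul, inv_mul_cancel₀ hi, one_smul]
  rw [hrx, Algebra.smul_def]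
  exact c.mul_mem_left _ h2

/-- Let `k` be a field of characteristic zero, `A` a Poisson algebra over
`k`, and `L` a field extension of `k`.  Equip `L ⊗[k] A` with the canonical Poisson bracket
(an `L`-bilinear Poisson bracket satisfying `{a ⊗ b, c ⊗ d} = ac ⊗ {b, d}`).  If `L ⊗[k] A`
satisfies the ACC on radical Poisson ideals, then so does `A`. -/
theorem poissonRadicalACC_of_baseChange
    {k : Type*} [Field k] [CharZero k] {A : Type*} [CommRing A] [Algebra k A]
    {L : Type*} [Field L] [Algebra k L]
    (B : A → A → A) (hB : IsPoissonBracket k B)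
    (BL : (L ⊗[k] A) → (L ⊗[k] A) → (L ⊗[k] A)) (hBL : IsPoissonBracket L BL)
    (hcompat : ∀ (a c : L) (b d : A),
      BL (a ⊗ₜ[k] b) (c ⊗ₜ[k] d) = (a * c) ⊗ₜ[k] (B b d))
    (hACC : PoissonRadicalACC BL) :
    PoissonRadicalACC B := by
  obtain ⟨BLadd, BLsmul, BLanti, _, BLmul⟩ := hBL
  have : CharZero L := charZero_of_injective_algebraMap (algebraMap k L).injective
  -- second-argument additivity and zero laws for BL
  have BLadd2 : ∀ x y z : L ⊗[k] A, BL x (y + z) = BL x y + BL x z := by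
    intro x y z
    rw [BLanti x (y + z), BLadd, BLanti y x, BLanti z x]
    ring
  have BLzero2 : ∀ x : L ⊗[k] A, BL x 0 = 0 := by
    intro x
    have := BLadd2 x 0 0
    rw [add_zero] at this
    exact (left_eq_add.mp this)
  have BLzero1 : ∀ x : L ⊗[k] A, BL 0 x = 0 := by
    intro x
    have := BLadd 0 0 x
    rw [add_zero] at this
    exact (left_eq_add.mp this)
  intro c hP hR hMono
  set inc := (Algebra.TensorProduct.includeRight : A →ₐ[k] L ⊗[k] A) with hinc
  -- the extension of each ideal in the chain is a Poisson ideal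
  have hmapP : ∀ n, IsPoissonIdeal BL (Ideal.map inc (c n)) := by
    intro n x z hz
    rw [Ideal.map] at hz
    refine Submodule.span_induction
      (p := fun z _ => BL x z ∈ Ideal.map inc (c n)) ?_ ?_ ?_ ?_ hz
    · rintro _ ⟨y, hy, rfl⟩
      rw [show inc y = (1 : L) ⊗ₜ[k] y from rfl]
      induction x using TensorProduct.induction_on with
      | zero => rw [BLzero1]; exact zero_mem _
      | tmul a w =>
        rw [hcompat]
        have hByc : B w y ∈ c n := hP n w y hy
        have : (a * 1) ⊗ₜ[k] (B w y) = (a ⊗ₜ[k] (1 : A)) * ((1 : L) ⊗ₜ[k] (B w y)) := by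
          rw [Algebra.TensorProduct.tmul_mul_tmul, one_mul]
        rw [this]
        exact Ideal.mul_mem_left _ _ (Ideal.mem_map_of_mem inc hByc)
      | add x1 x2 h1 h2 => rw [BLadd]; exact add_mem h1 h2
    · show BL x 0 ∈ Ideal.map inc (c n)
      rw [BLzero2]; exact zero_mem _
    · intro z1 z2 _ _ h1 h2
      show BL x (z1 + z2) ∈ Ideal.map inc (c n)
      rw [BLadd2]
      exact add_mem h1 h2
    · intro r w hw hBw
      show BL x (r • w) ∈ Ideal.map inc (c n)
      have hw' : w ∈ Ideal.map inc (c n) := by rw [Ideal.map]; exact hw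
      rw [smul_eq_mul, BLmul]
      exact add_mem (Ideal.mul_mem_left _ _ hw') (Ideal.mul_mem_left _ _ hBw)
  -- nonzero naturals are units in L ⊗[k] A
  have hu : ∀ m : ℕ, m ≠ 0 → IsUnit ((m : L ⊗[k] A)) := by
    intro m hm
    have h1 : IsUnit ((m : L)) := isUnit_iff_ne_zero.mpr (Nat.cast_ne_zero.mpr hm)
    have h2 := h1.map (algebraMap L (L ⊗[k] A))
    rwa [map_natCast] at h2
  -- the radical chain in L ⊗[k] A
  set J : ℕ → Ideal (L ⊗[k] A) := fun n => (Ideal.map inc (c n)).radical with hJ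
  have hJP : ∀ n, IsPoissonIdeal BL (J n) := by
    intro n x y hy
    obtain ⟨s, hs⟩ := hy
    exact ⟨2 * s, seidenberg_aux hu (BL x) (BLadd2 x) (BLmul x) _ (hmapP n x) hs⟩
  have hJR : ∀ n, (J n).IsRadical := fun n => Ideal.radical_isRadical _
  have hJM : Monotone J := fun a b hab => Ideal.radical_mono (Ideal.map_mono (hMono hab))
  obtain ⟨N, hN⟩ := hACC J hJP hJR hJM
  refine ⟨N, fun n hn => ?_⟩
  refine le_antisymm ?_ (hMono hn)
  intro x hx
  have h1 : inc x ∈ J n := Ideal.le_radical (Ideal.mem_map_of_mem inc hx)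
  rw [hN n hn] at h1
  obtain ⟨s, hs⟩ := h1
  rw [← map_pow] at hs
  have hxs : x ^ s ∈ c N := mem_of_tmul_mem_aux (c N) hs
  exact hR N ⟨s, hxs⟩
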